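/- Let Ω be a compact metric space and T : Ω → Ω a minimal homeomorphism. If PRP(Ω,T) is nonempty, then PRP(Ω,T) is residual in Ω (it contains a countable intersection of dense open subsets of Ω). -/

import Mathlib

open Filter Topology MeasureTheory

set_option linter.unusedSectionVars false

/-- A sequence in a metric space has the repetition property if for every `ε > 0` and
`r > 0` there is a positive integer `q` such that `dist (u k) (u (k+q)) < ε` for all
`k = 0, 1, …, ⌊r * q⌋`. -/
def RepetitionProperty {Ω : Type*} [PseudoMetricSpace Ω] (u : ℕ → Ω) : Prop :=
  ∀ ε > (0 : ℝ), ∀ r > (0 : ℝ), ∃ q : ℕ, 0 < q ∧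
    ∀ k : ℕ, k ≤ ⌊r * q⌋₊ → dist (u k) (u (k + q)) < ε

/-- `PRP T` is the set of points whose forward orbit under `T` has the repetition
property. -/
def PRP {Ω : Type*} [PseudoMetricSpace Ω] (T : Ω → Ω) : Set Ω :=
  { ω | RepetitionProperty fun k => T^[k] ω }

section Aux

variable {Ω : Type*} [MetricSpace Ω] [CompactSpace Ω] (T : Ω ≃ₜ Ω)

/-- The basic open approximants to `PRP`. -/
def Vset (n : ℕ) : Set Ω :=
  { ω | ∃ q : ℕ, 0 < q ∧ ∀ k : ℕ, k ≤ ⌊((n : ℝ) + 1) * q⌋₊ →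
      dist (T^[k] ω) (T^[k + q] ω) < 1 / ((n : ℝ) + 1) }

lemma isOpen_Vset (n : ℕ) : IsOpen (Vset T n) := by
  have : Vset T n = ⋃ q : ℕ, { ω : Ω | 0 < q ∧ ∀ k : ℕ, k ≤ ⌊((n : ℝ) + 1) * q⌋₊ →
      dist (T^[k] ω) (T^[k + q] ω) < 1 / ((n : ℝ) + 1) } := by
    ext ω; simp [Vset]
  rw [this]
  refine isOpen_iUnion fun q => ?_
  rcases Nat.eq_zero_or_pos q with hq | hq
  · convert isOpen_empty
    ext ω; simp [hq]
  · have : { ω : Ω | 0 < q ∧ ∀ k : ℕ, k ≤ ⌊((n : ℝ) + 1) * q⌋₊ →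
        dist (T^[k] ω) (T^[k + q] ω) < 1 / ((n : ℝ) + 1) } =
        ⋂ k ∈ Set.Iic ⌊((n : ℝ) + 1) * q⌋₊,
          { ω : Ω | dist (T^[k] ω) (T^[k + q] ω) < 1 / ((n : ℝ) + 1) } := by
      ext ω; simp [hq]
    rw [this]
    refine (Set.finite_Iic _).isOpen_biInter fun k _ => ?_
    exact isOpen_lt (Continuous.dist (T.continuous.iterate k)
      (T.continuous.iterate (k + q))) continuous_const

lemma PRP_subset_Vset (n : ℕ) : PRP (⇑T) ⊆ Vset T n := by
  intro ω hω
  have h1 : (0 : ℝ) < 1 / ((n : ℝ) + 1) := by positivity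
  have h2 : (0 : ℝ) < (n : ℝ) + 1 := by positivity
  exact hω _ h1 _ h2

lemma iInter_Vset_subset_PRP : (⋂ n, Vset T n) ⊆ PRP (⇑T) := by
  intro ω hω ε hε r hr
  obtain ⟨n₁, hn₁⟩ := exists_nat_one_div_lt hε
  obtain ⟨n₂, hn₂⟩ := exists_nat_gt r
  set n := max n₁ n₂ with hn
  have hmem := Set.mem_iInter.mp hω n
  obtain ⟨q, hq, h⟩ := hmem
  refine ⟨q, hq, fun k hk => ?_⟩
  have hrn : r ≤ (n : ℝ) + 1 := by
    have : (n₂ : ℝ) ≤ (n : ℝ) := by exact_mod_cast Nat.le_max_right n₁ n₂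
    linarith
  have hfl : ⌊r * q⌋₊ ≤ ⌊((n : ℝ) + 1) * q⌋₊ :=
    Nat.floor_le_floor (mul_le_mul_of_nonneg_right hrn (Nat.cast_nonneg q))
  have hd := h k (le_trans hk hfl)
  have hle : 1 / ((n : ℝ) + 1) ≤ 1 / ((n₁ : ℝ) + 1) := by
    have : (n₁ : ℝ) + 1 ≤ (n : ℝ) + 1 := by
      have : (n₁ : ℝ) ≤ (n : ℝ) := by exact_mod_cast Nat.le_max_left n₁ n₂
      linarith
    exact one_div_le_one_div_of_le (by positivity) this
  exact hd.trans_le (hle.trans hn₁.le)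

lemma PRP_mem_forward {ω : Ω} (hω : ω ∈ PRP (⇑T)) : T ω ∈ PRP (⇑T) := by
  intro ε hε r hr
  obtain ⟨q, hq, h⟩ := hω ε hε (r + 1) (by linarith)
  refine ⟨q, hq, fun k hk => ?_⟩
  have hfl : ⌊(r + 1) * (q : ℝ)⌋₊ = ⌊r * q⌋₊ + q := by
    rw [add_mul, one_mul, Nat.floor_add_natCast (by positivity)]
  have hk' : k + 1 ≤ ⌊(r + 1) * (q : ℝ)⌋₊ := by omega
  have := h (k + 1) hk'
  simpa [Function.iterate_succ_apply, Nat.add_right_comm k 1 q] using this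

lemma PRP_mem_backward {ω : Ω} (hω : ω ∈ PRP (⇑T)) : T.symm ω ∈ PRP (⇑T) := by
  intro ε hε r hr
  have hUC : UniformContinuous (⇑T.symm) :=
    CompactSpace.uniformContinuous_of_continuous T.symm.continuous
  obtain ⟨δ, hδ, hδε⟩ := Metric.uniformContinuous_iff.mp hUC ε hε
  obtain ⟨q, hq, h⟩ := hω δ hδ r hr
  refine ⟨q, hq, fun k hk => ?_⟩
  have hc : Function.Commute (⇑T.symm) (⇑T) := fun x => by simp
  have hi : ∀ m : ℕ, T^[m] (T.symm ω) = T.symm (T^[m] ω) := fun m =>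
    ((hc.iterate_right m) ω).symm
  show dist ((⇑T)^[k] (T.symm ω)) ((⇑T)^[k + q] (T.symm ω)) < ε
  rw [hi k, hi (k + q)]
  exact hδε (h k hk)

lemma PRP_mem_zpow (m : ℤ) : ∀ ω : Ω, ω ∈ PRP (⇑T) → (T.toEquiv ^ m) ω ∈ PRP (⇑T) := by
  induction m using Int.induction_on with
  | zero => intro ω hω; simpa using hω
  | succ i ih =>
    intro ω hω
    have : (T.toEquiv ^ ((i : ℤ) + 1)) ω = (T.toEquiv ^ (i : ℤ)) (T ω) := by
      rw [zpow_add_one]; rfl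
    rw [this]
    exact ih _ (PRP_mem_forward T hω)
  | pred i ih =>
    intro ω hω
    have : (T.toEquiv ^ (-(i : ℤ) - 1)) ω = (T.toEquiv ^ (-(i : ℤ))) (T.symm ω) := by
      rw [zpow_sub_one]; rfl
    rw [this]
    exact ih _ (PRP_mem_backward T hω)

end Aux

/-- For a minimal homeomorphism `T` of a compact metric space, if `PRP (Ω, T)` is
nonempty then it is residual. -/
theorem PRP_residual_of_nonempty {Ω : Type*} [MetricSpace Ω] [CompactSpace Ω]
    (T : Ω ≃ₜ Ω)
    (hmin : ∀ ω : Ω, Dense (Set.range fun n : ℤ => (T.toEquiv ^ n) ω))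
    (hne : (PRP (⇑T)).Nonempty) :
    PRP (⇑T) ∈ residual Ω := by
  obtain ⟨ω₀, hω₀⟩ := hne
  have horb : Set.range (fun n : ℤ => (T.toEquiv ^ n) ω₀) ⊆ PRP (⇑T) := by
    rintro _ ⟨m, rfl⟩
    exact PRP_mem_zpow T m ω₀ hω₀
  have hdense : ∀ n : ℕ, Dense (Vset T n) := fun n =>
    (hmin ω₀).mono (horb.trans (PRP_subset_Vset T n))
  have hV : ∀ n : ℕ, Vset T n ∈ residual Ω := fun n =>
    residual_of_dense_open (isOpen_Vset T n) (hdense n)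
  exact Filter.mem_of_superset (countable_iInter_mem.mpr hV)
    (iInter_Vset_subset_PRP T)
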